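/- Every infinite compact abelian subgroup G of GL₂(ℝ) is conjugate in GL₂(ℝ) to the rotation group SO₂(ℝ): there exists P ∈ GL₂(ℝ) with P·G·P⁻¹ = SO₂(ℝ). -/

import Mathlib

open Matrix Real

noncomputable section Stmt16Aux


abbrev M2 := Matrix (Fin 2) (Fin 2) ℝ

/-- rotation matrix -/
def rotm (θ : ℝ) : M2 := !![Real.cos θ, -Real.sin θ; Real.sin θ, Real.cos θ]

lemma rotm_mul (θ φ : ℝ) : rotm θ * rotm φ = rotm (θ + φ) := by
  ext i j
  fin_cases i <;> fin_cases j <;>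
    simp [rotm, Matrix.mul_apply, Fin.sum_univ_two, Real.cos_add, Real.sin_add] <;> ring

lemma rotm_zero : rotm 0 = 1 := by
  ext i j; fin_cases i <;> fin_cases j <;> simp [rotm]

/-- rotation as an element of GL₂ -/
def rotGL (θ : ℝ) : GL (Fin 2) ℝ :=
  ⟨rotm θ, rotm (-θ), by rw [rotm_mul, add_neg_cancel, rotm_zero],
    by rw [rotm_mul, neg_add_cancel, rotm_zero]⟩

@[simp] lemma rotGL_val (θ : ℝ) : (rotGL θ : M2) = rotm θ := rfl

lemma rotGL_add (θ φ : ℝ) : rotGL (θ + φ) = rotGL θ * rotGL φ := by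
  apply Units.ext; simp [rotGL, Units.val_mul, rotm_mul]

@[simp] lemma rotGL_zero : rotGL 0 = 1 := by
  apply Units.ext; simp [rotGL, rotm_zero]

lemma rotGL_neg (θ : ℝ) : rotGL (-θ) = (rotGL θ)⁻¹ := by
  apply eq_inv_of_mul_eq_one_left
  rw [← rotGL_add, neg_add_cancel, rotGL_zero]

lemma rotGL_continuous : Continuous rotGL := by
  rw [Units.continuous_iff]
  constructor
  · apply continuous_matrix
    intro i j
    fin_cases i <;> fin_cases j <;>
      simp [rotm] <;> fun_prop
  · have : (fun θ => (↑(rotGL θ)⁻¹ : M2)) = fun θ => rotm (-θ) := by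
      funext θ; rw [← rotGL_neg]; rfl
    rw [this]
    apply continuous_matrix
    intro i j
    fin_cases i <;> fin_cases j <;>
      simp [rotm] <;> fun_prop

lemma rotGL_zsmul (α : ℝ) : ∀ n : ℤ, rotGL (n • α) = rotGL α ^ n := by
  have hn : ∀ m : ℕ, rotGL (m • α) = rotGL α ^ m := by
    intro m
    induction m with
    | zero => simp
    | succ k ih => rw [succ_nsmul, rotGL_add, ih, pow_succ]
  intro n
  induction n using Int.rec with
  | ofNat m => simpa using hn m
  | negSucc m =>
      have : Int.negSucc m • α = -((m+1 : ℕ) • α) := by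
        simp [Int.negSucc_eq]; ring
      rw [this, rotGL_neg, hn]
      simp [zpow_negSucc]



/-- Cayley-Hamilton for 2×2 -/
lemma ch2 (A : M2) : A * A = A.trace • A - A.det • (1 : M2) := by
  ext i j
  fin_cases i <;> fin_cases j <;>
    simp [Matrix.mul_apply, Fin.sum_univ_two, Matrix.trace_fin_two, Matrix.det_fin_two,
      Matrix.one_apply] <;> ring

/-- real eigenvector for a real root of the characteristic polynomial -/
lemma exists_eigvec (A : M2) (l : ℝ) (h : l ^ 2 - A.trace * l + A.det = 0) :
    ∃ v : Fin 2 → ℝ, v ≠ 0 ∧ A *ᵥ v = l • v := by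
  rw [Matrix.trace_fin_two, Matrix.det_fin_two] at h
  set a := A 0 0; set b := A 0 1; set c := A 1 0; set d := A 1 1
  by_cases hb : b ≠ 0
  · refine ⟨![b, l - a], ?_, ?_⟩
    · intro hv; exact hb (congrFun hv 0)
    · funext i; fin_cases i <;>
        simp [Matrix.mulVec, dotProduct, Fin.sum_univ_two] <;> nlinarith [h]
  by_cases hc : c ≠ 0
  · refine ⟨![l - d, c], ?_, ?_⟩
    · intro hv; exact hc (congrFun hv 1)
    · funext i; fin_cases i <;>
        simp [Matrix.mulVec, dotProduct, Fin.sum_univ_two] <;> nlinarith [h]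
  push_neg at hb hc
  have hld : (l - a) * (l - d) = 0 := by nlinarith [h]
  rcases mul_eq_zero.1 hld with h1 | h1
  · refine ⟨![1, 0], ?_, ?_⟩
    · intro hv; simpa using congrFun hv 0
    · funext i; fin_cases i <;>
        simp [Matrix.mulVec, dotProduct, Fin.sum_univ_two, hc] <;> linarith
  · refine ⟨![0, 1], ?_, ?_⟩
    · intro hv; simpa using congrFun hv 1
    · funext i; fin_cases i <;>
        simp [Matrix.mulVec, dotProduct, Fin.sum_univ_two, hb] <;> linarith

/-- no real eigenvalue of modulus > 1 for a matrix with uniformly bounded powers -/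
lemma no_growth {A : M2} {C : ℝ} (hC : ∀ n : ℕ, ∀ i j, |(A ^ n) i j| ≤ C)
    {l : ℝ} (hl : 1 < |l|) (hroot : l ^ 2 - A.trace * l + A.det = 0) : False := by
  obtain ⟨v, hv0, hv⟩ := exists_eigvec A l hroot
  have hpow : ∀ n : ℕ, (A ^ n) *ᵥ v = l ^ n • v := by
    intro n
    induction n with
    | zero => simp
    | succ k ih =>
        rw [pow_succ, ← Matrix.mulVec_mulVec, hv, Matrix.mulVec_smul, ih, smul_smul, pow_succ]
        ring_nf
  obtain ⟨i, hi⟩ : ∃ i, v i ≠ 0 := by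
    by_contra hcon; push_neg at hcon; exact hv0 (funext hcon)
  have key : ∀ n : ℕ, |l| ^ n * |v i| ≤ C * (|v 0| + |v 1|) := by
    intro n
    have h1 : ((A ^ n) *ᵥ v) i = (A ^ n) i 0 * v 0 + (A ^ n) i 1 * v 1 := by
      simp [Matrix.mulVec, dotProduct, Fin.sum_univ_two]
    have h2 : ((A ^ n) *ᵥ v) i = l ^ n * v i := by rw [hpow]; simp
    have hC0 : (0:ℝ) ≤ C := le_trans (abs_nonneg _) (hC 0 0 0)
    calc |l| ^ n * |v i| = |l ^ n * v i| := by rw [abs_mul, abs_pow]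
      _ = |(A ^ n) i 0 * v 0 + (A ^ n) i 1 * v 1| := by rw [← h2, h1]
      _ ≤ |(A ^ n) i 0| * |v 0| + |(A ^ n) i 1| * |v 1| := by
          refine (abs_add_le _ _).trans ?_; rw [abs_mul, abs_mul]
      _ ≤ C * |v 0| + C * |v 1| := by
          gcongr <;> [exact hC n i 0; exact hC n i 1]
      _ = C * (|v 0| + |v 1|) := by ring
  obtain ⟨n, hn⟩ := pow_unbounded_of_one_lt (C * (|v 0| + |v 1|) / |v i|) hl
  have hvi : 0 < |v i| := abs_pos.2 hi
  have := key n
  rw [div_lt_iff₀ hvi] at hn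
  linarith

/-- bounded powers + (A-1)² = 0 forces A = 1 -/
lemma unip {A : M2} {C : ℝ} (h : (A - 1) * (A - 1) = 0)
    (hC : ∀ n : ℕ, ∀ i j, |(A ^ n) i j| ≤ C) : A = 1 := by
  have key : ∀ n : ℕ, A ^ n = 1 + (n : ℝ) • (A - 1) := by
    intro n
    induction n with
    | zero => simp
    | succ k ih =>
        have hAA : (A - 1) * A = A - 1 := by
          have : (A - 1) * A = (A - 1) * (A - 1) + (A - 1) := by noncomm_ring
          rw [this, h, zero_add]
        rw [pow_succ, ih, add_mul, one_mul, Matrix.smul_mul, hAA]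
        push_cast
        rw [add_smul, one_smul]
        noncomm_ring
  by_contra hA
  obtain ⟨i, j, hij⟩ : ∃ i j, (A - 1) i j ≠ 0 := by
    by_contra hcon; push_neg at hcon
    apply hA
    have : A - 1 = 0 := by ext i j; exact hcon i j
    linear_combination (norm := abel) this
  obtain ⟨n, hn⟩ := exists_nat_gt ((C + 1) / |(A - 1) i j|)
  have hpos : 0 < |(A - 1) i j| := abs_pos.2 hij
  rw [div_lt_iff₀ hpos] at hn
  have hb := hC n i j
  rw [key n] at hb
  have hentry : (1 + (n : ℝ) • (A - 1)) i j = (1 : M2) i j + n * (A - 1) i j := by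
    simp [Matrix.add_apply]
  rw [hentry] at hb
  have h1 : |(1 : M2) i j| ≤ 1 := by
    by_cases hij' : i = j <;> simp [Matrix.one_apply, hij']
  have : (n : ℝ) * |(A - 1) i j| ≤ C + 1 := by
    calc (n : ℝ) * |(A - 1) i j| = |(n : ℝ) * (A - 1) i j| := by
          rw [abs_mul, Nat.abs_cast]
      _ = |((1 : M2) i j + n * (A - 1) i j) - (1 : M2) i j| := by congr 1; ring
      _ ≤ |(1 : M2) i j + n * (A - 1) i j| + |(1 : M2) i j| := abs_sub _ _
      _ ≤ C + 1 := add_le_add hb h1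
  linarith

/-- entries bound on compact set of GL₂ -/
lemma exists_entry_bound {S : Set (GL (Fin 2) ℝ)} (hS : IsCompact S) :
    ∃ C : ℝ, 1 ≤ C ∧ ∀ g ∈ S, ∀ i j, |(g : M2) i j| ≤ C := by
  have hcont : ∀ i j : Fin 2, Continuous fun g : GL (Fin 2) ℝ => |(g : M2) i j| :=
    fun i j => (Units.continuous_val.matrix_elem i j).abs
  have key : ∀ i j : Fin 2, ∃ c : ℝ, ∀ g ∈ S, |(g : M2) i j| ≤ c := by
    intro i j
    obtain ⟨c, hc⟩ := (hS.image (hcont i j)).bddAbove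
    exact ⟨c, fun g hg => hc (Set.mem_image_of_mem _ hg)⟩
  obtain ⟨c00, h00⟩ := key 0 0
  obtain ⟨c01, h01⟩ := key 0 1
  obtain ⟨c10, h10⟩ := key 1 0
  obtain ⟨c11, h11⟩ := key 1 1
  refine ⟨max (max (max c00 c01) (max c10 c11)) 1, le_max_right _ _, fun g hg i j => ?_⟩
  fin_cases i <;> fin_cases j
  · exact (h00 g hg).trans (le_max_of_le_left (le_max_of_le_left (le_max_left _ _)))
  · exact (h01 g hg).trans (le_max_of_le_left (le_max_of_le_left (le_max_right _ _)))
  · exact (h10 g hg).trans (le_max_of_le_left (le_max_of_le_right (le_max_left _ _)))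
  · exact (h11 g hg).trans (le_max_of_le_left (le_max_of_le_right (le_max_right _ _)))

/-- |det| ≤ 1 from bounded powers of determinant -/
lemma abs_det_le_one {A : M2} {C : ℝ} (hC : ∀ n : ℕ, |(A ^ n).det| ≤ C) : |A.det| ≤ 1 := by
  by_contra hcon
  push_neg at hcon
  obtain ⟨n, hn⟩ := pow_unbounded_of_one_lt C hcon
  have := hC n
  rw [Matrix.det_pow, abs_pow] at this
  linarith

/-- centralizer of a non-trivial rotation -/
lemma comm_rot {m : M2} {θ : ℝ} (hs : Real.sin θ ≠ 0)
    (h : m * (!![Real.cos θ, -Real.sin θ; Real.sin θ, Real.cos θ] : M2)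
       = !![Real.cos θ, -Real.sin θ; Real.sin θ, Real.cos θ] * m) :
    m 1 1 = m 0 0 ∧ m 0 1 = -m 1 0 := by
  have h00 := congrFun (congrFun h 0) 0
  have h01 := congrFun (congrFun h 0) 1
  simp [Matrix.mul_apply, Fin.sum_univ_two] at h00 h01
  constructor
  · have : Real.sin θ * (m 1 1 - m 0 0) = 0 := by linarith
    rcases mul_eq_zero.1 this with h' | h'
    · exact absurd h' hs
    · linarith
  · have : Real.sin θ * (m 0 1 + m 1 0) = 0 := by linarith
    rcases mul_eq_zero.1 this with h' | h'
    · exact absurd h' hs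
    · linarith

/-- parametrize the unit circle -/
lemma circle_param {p q : ℝ} (h : p ^ 2 + q ^ 2 = 1) :
    ∃ φ : ℝ, Real.cos φ = p ∧ Real.sin φ = q := by
  have hp1 : -1 ≤ p := by nlinarith
  have hp2 : p ≤ 1 := by nlinarith
  have hsin : Real.sin (Real.arccos p) = |q| := by
    rw [Real.sin_arccos]
    have : 1 - p ^ 2 = q ^ 2 := by linarith
    rw [this, Real.sqrt_sq_eq_abs]
  by_cases hq : 0 ≤ q
  · exact ⟨Real.arccos p, Real.cos_arccos hp1 hp2, by rw [hsin, abs_of_nonneg hq]⟩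
  · refine ⟨-Real.arccos p, by rw [Real.cos_neg]; exact Real.cos_arccos hp1 hp2, ?_⟩
    rw [Real.sin_neg, hsin, abs_of_neg (not_le.1 hq), neg_neg]

lemma abs_det_eq_one {g : GL (Fin 2) ℝ} {C : ℝ}
    (hg : ∀ n : ℕ, ∀ i j, |((g : M2) ^ n) i j| ≤ C)
    (hgi : ∀ n : ℕ, ∀ i j, |(((g⁻¹ : GL (Fin 2) ℝ) : M2) ^ n) i j| ≤ C) :
    |(g : M2).det| = 1 := by
  have hdb : ∀ B : M2, (∀ i j, |B i j| ≤ C) → |B.det| ≤ 2 * C ^ 2 := by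
    intro B hB
    rw [Matrix.det_fin_two]
    have h1 := hB 0 0; have h2 := hB 1 1; have h3 := hB 0 1; have h4 := hB 1 0
    have e1 := abs_nonneg (B 0 0); have e2 := abs_nonneg (B 1 1)
    have e3 := abs_nonneg (B 0 1); have e4 := abs_nonneg (B 1 0)
    calc |B 0 0 * B 1 1 - B 0 1 * B 1 0| ≤ |B 0 0 * B 1 1| + |B 0 1 * B 1 0| := abs_sub _ _
      _ = |B 0 0| * |B 1 1| + |B 0 1| * |B 1 0| := by rw [abs_mul, abs_mul]
      _ ≤ 2 * C ^ 2 := by nlinarith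
  have h1 : |(g : M2).det| ≤ 1 := abs_det_le_one (fun n => hdb _ (hg n))
  have h2 : |((g⁻¹ : GL (Fin 2) ℝ) : M2).det| ≤ 1 := abs_det_le_one (fun n => hdb _ (hgi n))
  have hprod : (g : M2).det * ((g⁻¹ : GL (Fin 2) ℝ) : M2).det = 1 := by
    rw [← Matrix.det_mul, ← Units.val_mul, mul_inv_cancel, Units.val_one, Matrix.det_one]
  have habs : |(g : M2).det| * |((g⁻¹ : GL (Fin 2) ℝ) : M2).det| = 1 := by
    rw [← abs_mul, hprod, abs_one]
  nlinarith [abs_nonneg (g : M2).det, abs_nonneg ((g⁻¹ : GL (Fin 2) ℝ) : M2).det]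

lemma sqrt_ge_two {x : ℝ} (hx : 4 ≤ x) : 2 ≤ Real.sqrt x := by
  have : Real.sqrt 4 ≤ Real.sqrt x := Real.sqrt_le_sqrt hx
  rwa [show (4:ℝ) = 2 ^ 2 by norm_num, Real.sqrt_sq (by norm_num : (0:ℝ) ≤ 2)] at this

lemma invol {g : GL (Fin 2) ℝ} {C : ℝ}
    (hg : ∀ n : ℕ, ∀ i j, |((g : M2) ^ n) i j| ≤ C)
    (hgi : ∀ n : ℕ, ∀ i j, |(((g⁻¹ : GL (Fin 2) ℝ) : M2) ^ n) i j| ≤ C)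
    (hdisc : ¬ ((g : M2).trace ^ 2 < 4 * (g : M2).det)) :
    g = 1 ∨ g = -1 ∨ (g : M2).trace = 0 := by
  set A : M2 := (g : M2) with hA
  set t : ℝ := A.trace with htdef
  have hdet1 : A.det = 1 ∨ A.det = -1 := by
    rcases abs_eq (by norm_num : (0:ℝ) ≤ 1) |>.1 (abs_det_eq_one hg hgi) with h | h
    · exact Or.inl h
    · exact Or.inr h
  push_neg at hdisc
  rcases hdet1 with hd | hd
  · -- det = 1 : trace² ≥ 4
    have ht4 : 4 ≤ t ^ 2 := by rw [hd] at hdisc; linarith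
    have hnt2 : ¬ (2 < t) := by
      intro ht
      have hs := Real.sq_sqrt (show (0:ℝ) ≤ t ^ 2 - 4 by nlinarith)
      refine no_growth hg (l := (t + Real.sqrt (t ^ 2 - 4)) / 2) ?_ ?_
      · rw [abs_of_pos (by positivity)]
        have := Real.sqrt_nonneg (t ^ 2 - 4)
        nlinarith
      · rw [← htdef, hd]; nlinarith
    have hnt2' : ¬ (t < -2) := by
      intro ht
      have hs := Real.sq_sqrt (show (0:ℝ) ≤ t ^ 2 - 4 by nlinarith)
      have hsn := Real.sqrt_nonneg (t ^ 2 - 4)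
      refine no_growth hg (l := (t - Real.sqrt (t ^ 2 - 4)) / 2) ?_ ?_
      · rw [abs_of_neg (by nlinarith)]; nlinarith
      · rw [← htdef, hd]; nlinarith
    push_neg at hnt2 hnt2'
    have ht : t = 2 ∨ t = -2 := by
      by_contra hcon
      push_neg at hcon
      have h1 : t < 2 := lt_of_le_of_ne hnt2 hcon.1
      have h2 : -2 < t := lt_of_le_of_ne (by linarith [hnt2']) (Ne.symm hcon.2)
      nlinarith
    have hch := ch2 A
    rw [← htdef, hd] at hch
    rcases ht with ht | ht
    · left
      rw [ht] at hch
      have hAA : A * A = A + A - 1 := by rw [hch, two_smul, one_smul]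
      have h0 : (A - 1) * (A - 1) = 0 := by
        have e : (A - 1) * (A - 1) = A * A - A - A + 1 := by noncomm_ring
        rw [e, hAA]; abel
      have : A = 1 := unip h0 hg
      exact Units.ext this
    · right; left
      rw [ht] at hch
      have hAA : A * A = -A + -A - 1 := by
        rw [hch, one_smul, show ((-2:ℝ) • A) = -A + -A by rw [neg_smul, two_smul]; abel]
      have h0 : (-A - 1) * (-A - 1) = 0 := by
        have e : (-A - 1) * (-A - 1) = A * A + A + A + 1 := by noncomm_ring
        rw [e, hAA]; abel
      have hBpow : ∀ n : ℕ, ∀ i j, |((-A) ^ n) i j| ≤ C := by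
        intro n i j
        rcases Nat.even_or_odd n with he | ho
        · rw [he.neg_pow]; exact hg n i j
        · rw [ho.neg_pow, Matrix.neg_apply, abs_neg]; exact hg n i j
      have : -A = 1 := unip h0 hBpow
      apply Units.ext
      rw [Units.val_neg, Units.val_one, ← hA]
      linear_combination (norm := abel) -this
  · -- det = -1 : show trace = 0
    right; right
    by_contra ht0
    rcases lt_trichotomy t 0 with ht | ht | ht
    · have hs := Real.sq_sqrt (show (0:ℝ) ≤ t ^ 2 + 4 by positivity)
      have hs2 := sqrt_ge_two (show (4:ℝ) ≤ t ^ 2 + 4 by nlinarith)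
      refine no_growth hg (l := (t - Real.sqrt (t ^ 2 + 4)) / 2) ?_ ?_
      · rw [abs_of_neg (by nlinarith)]; nlinarith
      · rw [← htdef, hd]; nlinarith
    · exact ht0 ht
    · have hs := Real.sq_sqrt (show (0:ℝ) ≤ t ^ 2 + 4 by positivity)
      have hs2 := sqrt_ge_two (show (4:ℝ) ≤ t ^ 2 + 4 by nlinarith)
      refine no_growth hg (l := (t + Real.sqrt (t ^ 2 + 4)) / 2) ?_ ?_
      · rw [abs_of_pos (by nlinarith)]; nlinarith
      · rw [← htdef, hd]; nlinarith

lemma matQ_mul_inv {a c t s : ℝ} (hc : c ≠ 0) (hs : s ≠ 0) :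
    (!![1, (a - t/2)/s; 0, c/s] : M2) * !![1, -((a - t/2)/c); 0, s/c] = 1 := by
  ext i j
  fin_cases i <;> fin_cases j <;>
    simp [Matrix.mul_apply, Fin.sum_univ_two, Matrix.one_apply] <;> field_simp <;> ring
lemma matQ_inv_mul {a c t s : ℝ} (hc : c ≠ 0) (hs : s ≠ 0) :
    (!![1, -((a - t/2)/c); 0, s/c] : M2) * !![1, (a - t/2)/s; 0, c/s] = 1 := by
  ext i j
  fin_cases i <;> fin_cases j <;>
    simp [Matrix.mul_apply, Fin.sum_univ_two, Matrix.one_apply] <;> field_simp <;> ring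
lemma conj_scalar {a b c d t s co : ℝ} (hs : s ≠ 0) (htr : t = a + d)
    (hdet : a * d - b * c = 1) (hs2 : s ^ 2 = 1 - (t/2) ^ 2) (hco : co = t/2) :
    (!![a, b; c, d] : M2) * !![1, (a - t/2)/s; 0, c/s]
      = !![1, (a - t/2)/s; 0, c/s] * !![co, -s; s, co] := by
  subst hco
  ext i j
  fin_cases i <;> fin_cases j <;>
    simp [Matrix.mul_apply, Fin.sum_univ_two] <;> field_simp <;>
    first
      | linear_combination (8*s^2) * hs2 + (-8*s^2) * hdet + (-8*s^2*a) * htr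
      | linear_combination (-4*s^2*c) * htr
      | linear_combination 4 * hs2 + (-4*a) * htr + (-4) * hdet
      | linear_combination (-2*c) * htr
      | ring

end Stmt16Aux

open scoped MatrixGroups

/-- every infinite compact abelian subgroup of `GL₂(ℝ)` is conjugate in
`GL₂(ℝ)` to the rotation group `SO₂(ℝ)`. -/
theorem stmt16 (G : Subgroup (GL (Fin 2) ℝ))
    (hinf : (G : Set (GL (Fin 2) ℝ)).Infinite)
    (hcpt : IsCompact (G : Set (GL (Fin 2) ℝ)))
    (hab : ∀ a ∈ G, ∀ b ∈ G, a * b = b * a) :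
    ∃ P : GL (Fin 2) ℝ,
      (fun g => P * g * P⁻¹) '' (G : Set (GL (Fin 2) ℝ)) =
        {g : GL (Fin 2) ℝ | ∃ θ : ℝ, (g : Matrix (Fin 2) (Fin 2) ℝ) =
          !![Real.cos θ, -Real.sin θ; Real.sin θ, Real.cos θ]} := by
  obtain ⟨C, hC1, hCb⟩ := exists_entry_bound hcpt
  have hpowb : ∀ g ∈ G, ∀ n : ℕ, ∀ i j, |((g : M2) ^ n) i j| ≤ C := by
    intro g hg n i j
    have := hCb (g ^ n) (pow_mem hg n) i j
    rwa [Units.val_pow_eq_pow_val] at this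
  -- STEP A : find an element with complex eigenvalues
  have hstepA : ∃ g0 ∈ G, ((g0 : M2).trace) ^ 2 < 4 * (g0 : M2).det := by
    by_contra hcon
    push_neg at hcon
    have hinvol : ∀ g ∈ G, g = 1 ∨ g = -1 ∨ (g : M2).trace = 0 := fun g hg =>
      invol (hpowb g hg) (hpowb g⁻¹ (inv_mem hg)) (not_lt.2 (hcon g hg))
    obtain ⟨x, hxG, hacc⟩ := hinf.exists_accPt_of_subset_isCompact hcpt Set.Subset.rfl
    have hUopen : IsOpen {u : GL (Fin 2) ℝ |
        |(u : M2) 0 0 - 1| < 1/2 ∧ |(u : M2) 1 1 - 1| < 1/2} := by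
      apply IsOpen.inter
      · exact isOpen_lt ((Units.continuous_val.matrix_elem 0 0).sub continuous_const).abs
          continuous_const
      · exact isOpen_lt ((Units.continuous_val.matrix_elem 1 1).sub continuous_const).abs
          continuous_const
    have hφcont : Continuous fun y : GL (Fin 2) ℝ => y * x⁻¹ := continuous_id.mul continuous_const
    have hmem1 : (fun y : GL (Fin 2) ℝ => y * x⁻¹) x ∈ {u : GL (Fin 2) ℝ |
        |(u : M2) 0 0 - 1| < 1/2 ∧ |(u : M2) 1 1 - 1| < 1/2} := by
      simp only [Set.mem_setOf_eq, mul_inv_cancel, Units.val_one, Matrix.one_apply_eq, sub_self,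
        abs_zero]
      norm_num
    have hU : (fun y : GL (Fin 2) ℝ => y * x⁻¹) ⁻¹' {u : GL (Fin 2) ℝ |
        |(u : M2) 0 0 - 1| < 1/2 ∧ |(u : M2) 1 1 - 1| < 1/2} ∈ nhds x :=
      (hUopen.preimage hφcont).mem_nhds hmem1
    obtain ⟨y, ⟨hyU, hyG⟩, hyx⟩ := accPt_iff_nhds.1 hacc _ hU
    simp only [Set.mem_preimage, Set.mem_setOf_eq] at hyU
    set u : GL (Fin 2) ℝ := y * x⁻¹ with hu
    have huG : u ∈ G := mul_mem hyG (inv_mem hxG)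
    have hu1 : u ≠ 1 := by
      rw [hu, Ne, mul_inv_eq_one]
      exact hyx
    obtain ⟨h00, h11⟩ := hyU
    rcases hinvol u huG with h | h | h
    · exact hu1 h
    · rw [h] at h00
      rw [Units.val_neg, Units.val_one] at h00
      simp only [Matrix.neg_apply, Matrix.one_apply_eq] at h00
      norm_num at h00
    · rw [Matrix.trace_fin_two] at h
      have e1 := abs_lt.1 h00
      have e2 := abs_lt.1 h11
      linarith [e1.1, e2.1]
  obtain ⟨g0, hg0G, hg0⟩ := hstepA
  -- STEP B : conjugate g0 to a rotation
  set A0 : M2 := (g0 : M2) with hA0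
  have hd1 : A0.det = 1 := by
    have habs := abs_det_eq_one (hpowb g0 hg0G) (hpowb g0⁻¹ (inv_mem hg0G))
    have hpos : 0 < A0.det := by nlinarith [sq_nonneg A0.trace]
    rwa [abs_of_pos hpos] at habs
  set t : ℝ := A0.trace with htdef
  have ht4 : t ^ 2 < 4 := by rw [hd1] at hg0; linarith
  set s : ℝ := Real.sin (Real.arccos (t / 2)) with hsdef
  set θ₀ : ℝ := Real.arccos (t / 2) with hθ₀def
  have hcos : Real.cos θ₀ = t / 2 := Real.cos_arccos (by nlinarith) (by nlinarith)
  have hsin : s = Real.sqrt (1 - (t / 2) ^ 2) := Real.sin_arccos _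
  have hspos : 0 < s := by
    rw [hsin]
    apply Real.sqrt_pos.2
    nlinarith
  have hs2 : s ^ 2 = 1 - (t / 2) ^ 2 := by
    rw [hsin]
    exact Real.sq_sqrt (by nlinarith)
  have hsne : s ≠ 0 := ne_of_gt hspos
  have htr : t = A0 0 0 + A0 1 1 := Matrix.trace_fin_two A0
  have hdet : A0 0 0 * A0 1 1 - A0 0 1 * A0 1 0 = 1 := by
    rw [← Matrix.det_fin_two, hd1]
  have hcne : A0 1 0 ≠ 0 := by
    intro h
    rw [h, mul_zero, sub_zero] at hdet
    have ht4' : (A0 0 0 + A0 1 1) ^ 2 < 4 := by rw [← htr]; exact ht4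
    nlinarith [sq_nonneg (A0 0 0 - A0 1 1)]
  set Q : M2 := !![1, (A0 0 0 - t/2)/s; 0, A0 1 0 / s] with hQdef
  set Qi : M2 := !![1, -((A0 0 0 - t/2)/(A0 1 0)); 0, s / A0 1 0] with hQidef
  have hQQi : Q * Qi = 1 := matQ_mul_inv hcne hsne
  have hQiQ : Qi * Q = 1 := matQ_inv_mul hcne hsne
  set Qu : GL (Fin 2) ℝ := ⟨Q, Qi, hQQi, hQiQ⟩ with hQudef
  have hrotm : rotm θ₀ = !![Real.cos θ₀, -s; s, Real.cos θ₀] := by rw [rotm, hsdef]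
  have hconj : A0 * Q = Q * rotm θ₀ := by
    rw [hrotm, hQdef]
    have h := conj_scalar (a := A0 0 0) (b := A0 0 1) (c := A0 1 0) (d := A0 1 1)
      (co := Real.cos θ₀) hsne htr hdet hs2 hcos
    rw [← Matrix.eta_fin_two A0] at h
    exact h
  have hgu : g0 * Qu = Qu * rotGL θ₀ := by
    apply Units.ext
    rw [Units.val_mul, Units.val_mul]
    show A0 * Q = Q * (rotGL θ₀ : M2)
    rw [rotGL_val]
    exact hconj
  set P : GL (Fin 2) ℝ := Qu⁻¹ with hPdef
  have hPg : P * g0 * P⁻¹ = rotGL θ₀ := by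
    rw [hPdef, inv_inv, mul_assoc, hgu, ← mul_assoc, inv_mul_cancel, one_mul]
  refine ⟨P, ?_⟩
  -- the conjugated subgroup
  set G' : Subgroup (GL (Fin 2) ℝ) := Subgroup.map (MulAut.conj P).toMonoidHom G with hG'def
  have hfun : ⇑(MulAut.conj P).toMonoidHom = fun g : GL (Fin 2) ℝ => P * g * P⁻¹ := by
    funext g; simp [MulAut.conj_apply]
  have hGset : (fun g => P * g * P⁻¹) '' (G : Set (GL (Fin 2) ℝ)) = (G' : Set (GL (Fin 2) ℝ)) := by
    rw [hG'def, Subgroup.coe_map, hfun]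
  rw [hGset]
  have hG'cpt : IsCompact (G' : Set (GL (Fin 2) ℝ)) := by
    rw [← hGset]
    exact hcpt.image ((continuous_const.mul continuous_id).mul continuous_const)
  have hG'inf : (G' : Set (GL (Fin 2) ℝ)).Infinite := by
    rw [← hGset]
    exact hinf.image ((mul_left_injective P⁻¹).comp (mul_right_injective P)).injOn
  have hrotmem : rotGL θ₀ ∈ G' := by
    rw [hG'def]
    exact Subgroup.mem_map.2 ⟨g0, hg0G, by rw [MulEquiv.coe_toMonoidHom, MulAut.conj_apply]; exact hPg⟩
  obtain ⟨C', hC'1, hC'b⟩ := exists_entry_bound hG'cpt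
  have hpowb' : ∀ u ∈ G', ∀ n : ℕ, ∀ i j, |((u : M2) ^ n) i j| ≤ C' := by
    intro u hu n i j
    have := hC'b (u ^ n) (pow_mem hu n) i j
    rwa [Units.val_pow_eq_pow_val] at this
  have hcomm : ∀ u ∈ G', (u : M2) * rotm θ₀ = rotm θ₀ * (u : M2) := by
    intro u hu
    rw [hG'def] at hu
    obtain ⟨a, haG, rfl⟩ := Subgroup.mem_map.1 hu
    have : (MulAut.conj P).toMonoidHom a * rotGL θ₀ = rotGL θ₀ * (MulAut.conj P).toMonoidHom a := by
      have h1 : rotGL θ₀ = (MulAut.conj P).toMonoidHom g0 := by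
        rw [MulEquiv.coe_toMonoidHom, MulAut.conj_apply]; exact hPg.symm
      rw [h1, ← _root_.map_mul, ← _root_.map_mul, hab a haG g0 hg0G]
    have := congrArg Units.val this
    rw [Units.val_mul, Units.val_mul, rotGL_val] at this
    exact this
  have hsub : ∀ u ∈ G', ∃ φ : ℝ, (u : M2) = rotm φ := by
    intro u hu
    obtain ⟨h11, h01⟩ := comm_rot hsne (hcomm u hu)
    have hdetu : |(u : M2).det| = 1 := abs_det_eq_one (hpowb' u hu) (hpowb' u⁻¹ (inv_mem hu))
    have hdet2 : (u : M2).det = (u : M2) 0 0 ^ 2 + (u : M2) 1 0 ^ 2 := by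
      rw [Matrix.det_fin_two, h11, h01]; ring
    have hdet1 : (u : M2) 0 0 ^ 2 + (u : M2) 1 0 ^ 2 = 1 := by
      rw [hdet2] at hdetu
      rwa [abs_of_nonneg (by positivity)] at hdetu
    obtain ⟨φ, hφc, hφs⟩ := circle_param hdet1
    refine ⟨φ, ?_⟩
    ext i j
    fin_cases i <;> fin_cases j <;> simp only [rotm] <;>
      simp [hφc, hφs, h11, h01]
  -- the additive subgroup of angles
  set S : AddSubgroup ℝ :=
    { carrier := {θ : ℝ | rotGL θ ∈ G'}
      zero_mem' := by simp only [Set.mem_setOf_eq, rotGL_zero]; exact one_mem G'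
      add_mem' := by
        intro a b ha hb
        simp only [Set.mem_setOf_eq] at *
        rw [rotGL_add]
        exact mul_mem ha hb
      neg_mem' := by
        intro a ha
        simp only [Set.mem_setOf_eq] at *
        rw [rotGL_neg]
        exact inv_mem ha } with hSdef
  have hSmem : ∀ θ : ℝ, θ ∈ S ↔ rotGL θ ∈ G' := fun θ => Iff.rfl
  have h2pi : (2 * Real.pi) ∈ S := by
    rw [hSmem]
    have : rotGL (2 * Real.pi) = 1 := by
      apply Units.ext
      rw [rotGL_val, Units.val_one]
      ext i j
      fin_cases i <;> fin_cases j <;>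
        simp [rotm, Real.cos_two_pi, Real.sin_two_pi, Matrix.one_apply]
    rw [this]
    exact one_mem G'
  rcases S.dense_or_cyclic with hdense | ⟨α, hα⟩
  · -- dense case : conclude
    ext u
    constructor
    · intro hu
      exact hsub u hu
    · rintro ⟨θ, hθ⟩
      have huθ : u = rotGL θ := by
        apply Units.ext
        rw [rotGL_val, rotm]
        exact hθ
      rw [huθ]
      have h1 : rotGL θ ∈ closure (rotGL '' (S : Set ℝ)) :=
        mem_closure_image rotGL_continuous.continuousAt (hdense θ)
      have h2 : rotGL '' (S : Set ℝ) ⊆ (G' : Set (GL (Fin 2) ℝ)) := by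
        rintro _ ⟨θ', hθ', rfl⟩
        exact hθ'
      have h3 : closure (rotGL '' (S : Set ℝ)) ⊆ (G' : Set (GL (Fin 2) ℝ)) := by
        rw [← hG'cpt.isClosed.closure_eq]
        exact closure_mono h2
      exact h3 h1
  · -- cyclic case : contradiction with infiniteness
    exfalso
    rw [hα] at h2pi
    obtain ⟨k, hk⟩ := AddSubgroup.mem_closure_singleton.1 h2pi
    have hk0 : k ≠ 0 := by
      intro h
      rw [h, zero_smul] at hk
      have := Real.pi_pos
      linarith
    set z : GL (Fin 2) ℝ := rotGL α with hzdef
    have hzk : z ^ k = 1 := by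
      rw [hzdef, ← rotGL_zsmul, hk]
      apply Units.ext
      rw [rotGL_val, Units.val_one]
      ext i j
      fin_cases i <;> fin_cases j <;>
        simp [rotm, Real.cos_two_pi, Real.sin_two_pi, Matrix.one_apply]
    have hfo : IsOfFinOrder z := by
      rw [isOfFinOrder_iff_pow_eq_one]
      refine ⟨k.natAbs, Int.natAbs_pos.2 hk0, ?_⟩
      rcases Int.natAbs_eq k with h | h
      · rw [← zpow_natCast, ← h, hzk]
      · rw [← zpow_natCast, ← neg_neg (k.natAbs : ℤ), ← h, _root_.zpow_neg, hzk, inv_one]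
    have hG'sub : (G' : Set (GL (Fin 2) ℝ)) ⊆ (Subgroup.zpowers z : Set (GL (Fin 2) ℝ)) := by
      intro u hu
      obtain ⟨φ, hφ⟩ := hsub u hu
      have huφ : u = rotGL φ := by
        apply Units.ext
        rw [rotGL_val]
        exact hφ
      have hφS : φ ∈ S := by
        rw [hSmem, ← huφ]
        exact hu
      rw [hα] at hφS
      obtain ⟨n, hn⟩ := AddSubgroup.mem_closure_singleton.1 hφS
      rw [huφ, ← hn, rotGL_zsmul]
      exact Subgroup.mem_zpowers_iff.2 ⟨n, rfl⟩
    exact hG'inf (hfo.finite_zpowers.subset hG'sub)
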